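/- arXiv:2312.00350 — 2 statements merged into one kernel-verified Lean document; each statement's English description precedes it below -/
import Mathlib

section
/- For u > arccosh(3/2), the derivative φ′(u) = sinh(u)/sinh(φ(u)) of φ(u) = arccosh(cosh u − 1/2) is strictly monotonically decreasing, with φ′(u) → ∞ as u → arccosh(3/2)⁺ and φ′(u) → 1 as u → ∞. -/
noncomputable def arcosh (x : ℝ) : ℝ := Real.log (x + Real.sqrt (x ^ 2 - 1))

noncomputable def kappa : ℝ := arcosh (3 / 2)

noncomputable def phi (u : ℝ) : ℝ := arcosh (Real.cosh u - 1 / 2)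

open Real Filter Set

lemma aux_inv (x : ℝ) (hx : 1 ≤ x) :
    (x + Real.sqrt (x ^ 2 - 1))⁻¹ = x - Real.sqrt (x ^ 2 - 1) := by
  have h0 : (0:ℝ) ≤ x ^ 2 - 1 := by nlinarith
  have hs : Real.sqrt (x ^ 2 - 1) ^ 2 = x ^ 2 - 1 := Real.sq_sqrt h0
  have hsnn : 0 ≤ Real.sqrt (x ^ 2 - 1) := Real.sqrt_nonneg _
  have hy : (0:ℝ) < x + Real.sqrt (x ^ 2 - 1) := by nlinarith
  have : (x + Real.sqrt (x ^ 2 - 1)) * (x - Real.sqrt (x ^ 2 - 1)) = 1 := by nlinarith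
  field_simp
  nlinarith

lemma exp_arcosh (x : ℝ) (hx : 1 ≤ x) :
    Real.exp (_root_.arcosh x) = x + Real.sqrt (x ^ 2 - 1) := by
  have h0 : (0:ℝ) ≤ x ^ 2 - 1 := by nlinarith
  have hsnn : 0 ≤ Real.sqrt (x ^ 2 - 1) := Real.sqrt_nonneg _
  exact Real.exp_log (by nlinarith)

lemma cosh_arcosh (x : ℝ) (hx : 1 ≤ x) : Real.cosh (_root_.arcosh x) = x := by
  rw [Real.cosh_eq, Real.exp_neg, exp_arcosh x hx, aux_inv x hx]
  ring

lemma sinh_arcosh (x : ℝ) (hx : 1 ≤ x) :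
    Real.sinh (_root_.arcosh x) = Real.sqrt (x ^ 2 - 1) := by
  rw [Real.sinh_eq, Real.exp_neg, exp_arcosh x hx, aux_inv x hx]
  ring

lemma kappa_pos : 0 < kappa := by
  have hsnn : 0 ≤ Real.sqrt ((3/2:ℝ) ^ 2 - 1) := Real.sqrt_nonneg _
  exact Real.log_pos (by nlinarith)

lemma cosh_gt (u : ℝ) (hu : u ∈ Set.Ioi kappa) : 3/2 < Real.cosh u := by
  have h := cosh_arcosh (3/2) (by norm_num)
  have hk := kappa_pos
  have hu' : kappa < u := hu
  calc (3/2:ℝ) = Real.cosh kappa := h.symm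
    _ < Real.cosh u := by
        rw [Real.cosh_lt_cosh]
        rw [abs_of_pos hk, abs_of_pos (hk.trans hu')]
        exact hu'

lemma sinh_phi (u : ℝ) (hu : u ∈ Set.Ioi kappa) :
    Real.sinh (phi u) = Real.sqrt ((Real.cosh u - 1/2) ^ 2 - 1) := by
  have h := cosh_gt u hu
  exact sinh_arcosh _ (by linarith)

lemma sinh_eq_sqrt (u : ℝ) (hu : 0 < u) :
    Real.sinh u = Real.sqrt (Real.cosh u ^ 2 - 1) := by
  have h : Real.cosh u ^ 2 - 1 = Real.sinh u ^ 2 := by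
    have := Real.cosh_sq u; linarith
  rw [h, Real.sqrt_sq (le_of_lt (Real.sinh_pos_iff.mpr hu))]

lemma f_eq (u : ℝ) (hu : u ∈ Set.Ioi kappa) :
    Real.sinh u / Real.sinh (phi u)
      = Real.sqrt ((Real.cosh u ^ 2 - 1) / ((Real.cosh u - 1/2) ^ 2 - 1)) := by
  have hc := cosh_gt u hu
  have hupos : 0 < u := kappa_pos.trans hu
  rw [sinh_eq_sqrt u hupos, sinh_phi u hu, Real.sqrt_div (by nlinarith)]

lemma G_tendsto :
    Filter.Tendsto (fun c : ℝ => (c ^ 2 - 1) / ((c - 1/2) ^ 2 - 1))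
      Filter.atTop (nhds 1) := by
  have h1 : Filter.Tendsto (fun c : ℝ => c⁻¹) Filter.atTop (nhds 0) :=
    tendsto_inv_atTop_zero
  have hnum : Filter.Tendsto (fun c : ℝ => 1 - (c⁻¹) ^ 2) Filter.atTop (nhds 1) := by
    have := ((h1.pow 2)).const_sub 1
    simpa using this
  have hden : Filter.Tendsto (fun c : ℝ => 1 - c⁻¹ - (3/4) * (c⁻¹) ^ 2)
      Filter.atTop (nhds 1) := by
    have h2 := (h1.const_sub 1)
    have h3 := (h1.pow 2).const_mul (3/4 : ℝ)
    have := h2.sub h3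
    simpa using this
  have hT : Filter.Tendsto (fun c : ℝ => (1 - (c⁻¹) ^ 2) / (1 - c⁻¹ - (3/4) * (c⁻¹) ^ 2))
      Filter.atTop (nhds 1) := by
    have := hnum.div hden one_ne_zero
    simpa [Pi.div_def] using this
  refine hT.congr' ?_
  filter_upwards [eventually_gt_atTop (2:ℝ)] with c hc
  have hc0 : c ≠ 0 := by positivity
  have hd : (c - 1/2) ^ 2 - 1 ≠ 0 := by nlinarith
  have hci : c⁻¹ < 1/2 := by
    rw [inv_lt_comm₀ (by linarith) (by norm_num)]
    simpa using hc
  have hcip : 0 < c⁻¹ := by positivity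
  have hd2 : 1 - c⁻¹ - (3/4) * (c⁻¹) ^ 2 ≠ 0 := by nlinarith
  rw [div_eq_div_iff hd2 hd]
  field_simp
  ring

lemma cosh_tendsto_atTop : Filter.Tendsto Real.cosh Filter.atTop Filter.atTop := by
  apply tendsto_atTop_mono (fun x => ?_) (Real.tendsto_exp_atTop.atTop_div_const two_pos)
  rw [Real.cosh_eq]
  have := Real.exp_pos (-x)
  linarith

theorem phi_deriv_strictAnti_and_limits :
    StrictAntiOn (fun u => Real.sinh u / Real.sinh (phi u)) (Set.Ioi kappa) ∧
      Filter.Tendsto (fun u => Real.sinh u / Real.sinh (phi u))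
        (nhdsWithin kappa (Set.Ioi kappa)) Filter.atTop ∧
      Filter.Tendsto (fun u => Real.sinh u / Real.sinh (phi u))
        Filter.atTop (nhds 1) := by
  refine ⟨?_, ?_, ?_⟩
  · -- strict anti
    intro u hu v hv huv
    have ha := cosh_gt u hu
    have hb := cosh_gt v hv
    set a := Real.cosh u with hadef
    set b := Real.cosh v with hbdef
    have hab : a < b := by
      rw [hadef, hbdef, Real.cosh_lt_cosh,
        abs_of_pos (kappa_pos.trans hu), abs_of_pos (kappa_pos.trans hv)]
      exact huv
    simp only
    rw [f_eq u hu, f_eq v hv]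
    apply Real.sqrt_lt_sqrt
    · apply div_nonneg <;> nlinarith
    · rw [div_lt_div_iff₀ (by nlinarith) (by nlinarith)]
      nlinarith [mul_pos (sub_pos.mpr hab)
        (show (0:ℝ) < a * b - (a + b) / 4 + 1 by nlinarith)]
  · -- tendsto atTop at kappa⁺
    have hsk : 0 < Real.sinh kappa := Real.sinh_pos_iff.mpr kappa_pos
    have hnum : Filter.Tendsto Real.sinh (nhdsWithin kappa (Set.Ioi kappa))
        (nhds (Real.sinh kappa)) :=
      (Real.continuous_sinh.tendsto kappa).mono_left nhdsWithin_le_nhds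
    have hg : Filter.Tendsto (fun u => Real.sinh (phi u))
        (nhdsWithin kappa (Set.Ioi kappa)) (nhdsWithin 0 (Set.Ioi 0)) := by
      rw [tendsto_nhdsWithin_iff]
      constructor
      · have hcont : Continuous fun u => Real.sqrt ((Real.cosh u - 1/2) ^ 2 - 1) := by
          continuity
        have hck : Real.cosh kappa = 3/2 := cosh_arcosh (3/2) (by norm_num)
        have h0 : Real.sqrt ((Real.cosh kappa - 1/2) ^ 2 - 1) = 0 := by
          rw [hck]; norm_num
        have := (hcont.tendsto kappa).mono_left
          (nhdsWithin_le_nhds (s := Set.Ioi kappa))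
        rw [h0] at this
        refine this.congr' ?_
        filter_upwards [eventually_mem_nhdsWithin] with x hx
        exact (sinh_phi x hx).symm
      · filter_upwards [eventually_mem_nhdsWithin] with x hx
        have hc := cosh_gt x hx
        rw [sinh_phi x hx]
        exact Real.sqrt_pos.mpr (by nlinarith)
    have := hnum.pos_mul_atTop hsk hg.inv_tendsto_nhdsGT_zero
    refine this.congr ?_
    intro x
    rw [div_eq_mul_inv]
    rfl
  · -- tendsto 1 at atTop
    have hcomp : Filter.Tendsto
        (fun u => (Real.cosh u ^ 2 - 1) / ((Real.cosh u - 1/2) ^ 2 - 1))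
        Filter.atTop (nhds 1) := G_tendsto.comp cosh_tendsto_atTop
    have hs : Filter.Tendsto
        (fun u => Real.sqrt ((Real.cosh u ^ 2 - 1) / ((Real.cosh u - 1/2) ^ 2 - 1)))
        Filter.atTop (nhds 1) := by
      have := (Real.continuous_sqrt.tendsto 1).comp hcomp
      simpa [Function.comp_def] using this
    refine hs.congr' ?_
    filter_upwards [eventually_gt_atTop kappa] with u hu
    exact (f_eq u hu).symm
end

section
/- Let u > arccosh(3/2), φ(u) = arccosh(cosh u − 1/2), and p ≥ 1 an integer. Then L_p(u) := Li₂(e^{−u−φ(u)}) − Li₂(e^{−u+φ(u)}) + u·φ(u) + 4pπ² > 0. -/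
noncomputable def Li2 (x : ℝ) : ℝ := ∑' n : ℕ, x ^ (n + 1) / ((n : ℝ) + 1) ^ 2

open Real

lemma hasSum_shift : HasSum (fun n : ℕ => (1:ℝ) / ((n:ℝ) + 1) ^ 2) (π ^ 2 / 6) := by
  have h : HasSum (fun n : ℕ => (1:ℝ) / ((n+1:ℕ):ℝ) ^ 2) (π ^ 2 / 6) := by
    rw [hasSum_nat_add_iff (f := fun n : ℕ => (1:ℝ) / (n:ℝ) ^ 2) 1]
    simpa using hasSum_zeta_two
  convert h using 2 with n
  push_cast
  ring

lemma summable_shift : Summable (fun n : ℕ => (1:ℝ) / ((n:ℝ) + 1) ^ 2) :=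
  hasSum_shift.summable

lemma Li2_nonneg {x : ℝ} (hx : 0 ≤ x) : 0 ≤ Li2 x := by
  apply tsum_nonneg
  intro n
  positivity

lemma Li2_le {x : ℝ} (hx0 : 0 ≤ x) (hx1 : x ≤ 1) : Li2 x ≤ π ^ 2 / 6 := by
  have hle : ∀ n : ℕ, x ^ (n + 1) / ((n:ℝ) + 1) ^ 2 ≤ 1 / ((n:ℝ) + 1) ^ 2 := by
    intro n
    gcongr
    exact pow_le_one₀ hx0 hx1
  have hs : Summable (fun n : ℕ => x ^ (n + 1) / ((n:ℝ) + 1) ^ 2) := by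
    apply Summable.of_nonneg_of_le (fun n => by positivity) hle summable_shift
  calc Li2 x ≤ ∑' n : ℕ, (1:ℝ) / ((n:ℝ) + 1) ^ 2 := Summable.tsum_le_tsum hle hs summable_shift
    _ = π ^ 2 / 6 := hasSum_shift.tsum_eq

lemma kappa_nonneg : 0 ≤ kappa := by
  unfold kappa _root_.arcosh
  apply Real.log_nonneg
  nlinarith [Real.sqrt_nonneg ((3/2:ℝ) ^ 2 - 1)]

lemma cosh_kappa : Real.cosh kappa = 3 / 2 := by
  have hs : Real.sqrt ((3/2:ℝ) ^ 2 - 1) = Real.sqrt (5/4) := by norm_num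
  have hs2 : Real.sqrt (5/4:ℝ) ^ 2 = 5/4 := Real.sq_sqrt (by norm_num)
  have hpos : (0:ℝ) < 3/2 + Real.sqrt (5/4) := by positivity
  have he : Real.exp kappa = 3/2 + Real.sqrt (5/4) := by
    unfold kappa _root_.arcosh
    rw [hs]
    exact Real.exp_log hpos
  rw [Real.cosh_eq, Real.exp_neg, he]
  have ha : 0 ≤ Real.sqrt (5/4:ℝ) := Real.sqrt_nonneg _
  set a := Real.sqrt (5/4:ℝ) with hadef
  rw [eq_div_iff (by norm_num : (2:ℝ) ≠ 0)]
  have h2 : (3/2 + a) * (3/2 + a)⁻¹ = 1 := mul_inv_cancel₀ (by positivity)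
  nlinarith [h2, hs2]

lemma phi_nonneg {u : ℝ} (hu : kappa < u) : 0 ≤ phi u := by
  have hc : (3:ℝ)/2 ≤ Real.cosh u := by
    rw [← cosh_kappa]
    rw [Real.cosh_le_cosh, abs_of_nonneg kappa_nonneg,
      abs_of_nonneg (le_trans kappa_nonneg hu.le)]
    exact hu.le
  unfold phi _root_.arcosh
  apply Real.log_nonneg
  nlinarith [Real.sqrt_nonneg ((Real.cosh u - 1/2) ^ 2 - 1)]

lemma phi_le {u : ℝ} (hu : kappa < u) : phi u ≤ u := by
  have hu0 : 0 ≤ u := le_trans kappa_nonneg hu.le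
  have hc1 : (1:ℝ) ≤ Real.cosh u - 1/2 := by
    have : Real.cosh kappa ≤ Real.cosh u := by
      rw [Real.cosh_le_cosh, abs_of_nonneg kappa_nonneg, abs_of_nonneg hu0]
      exact hu.le
    rw [cosh_kappa] at this; linarith
  have hsinh : 0 ≤ Real.sinh u := Real.sinh_nonneg_iff.mpr hu0
  have hsq : Real.sqrt ((Real.cosh u - 1/2) ^ 2 - 1) ≤ Real.sinh u := by
    rw [show Real.sinh u = Real.sqrt (Real.sinh u ^ 2) from (Real.sqrt_sq hsinh).symm]
    apply Real.sqrt_le_sqrt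
    nlinarith [Real.cosh_sq_sub_sinh_sq u]
  unfold phi _root_.arcosh
  calc Real.log (Real.cosh u - 1/2 + Real.sqrt ((Real.cosh u - 1/2) ^ 2 - 1))
      ≤ Real.log (Real.cosh u + Real.sinh u) := by
        apply Real.log_le_log (by nlinarith [Real.sqrt_nonneg ((Real.cosh u - 1/2) ^ 2 - 1)])
        linarith
    _ = u := by rw [Real.cosh_add_sinh, Real.log_exp]

theorem Lp_pos (p : ℕ) (hp : 1 ≤ p) (u : ℝ) (hu : kappa < u) :
    0 < Li2 (Real.exp (-u - phi u)) - Li2 (Real.exp (-u + phi u))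
      + u * phi u + 4 * p * Real.pi ^ 2 := by
  have h1 : 0 ≤ Li2 (Real.exp (-u - phi u)) := Li2_nonneg (Real.exp_nonneg _)
  have h2 : Li2 (Real.exp (-u + phi u)) ≤ π ^ 2 / 6 := by
    apply Li2_le (Real.exp_nonneg _)
    rw [Real.exp_le_one_iff]
    linarith [phi_le hu]
  have h3 : 0 ≤ u * phi u :=
    mul_nonneg (le_trans kappa_nonneg hu.le) (phi_nonneg hu)
  have hπ : 0 < π ^ 2 := by positivity
  have hp' : (1:ℝ) ≤ p := by exact_mod_cast hp
  nlinarith [mul_le_mul_of_nonneg_right hp' hπ.le]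
end
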